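/- Let A ∈ ℤ^(m×m) be symmetric positive definite, S ∈ ℤ^(n×n) symmetric, H, K ∈ ℝ^(m×n), and f with f(U) exp(−π tr(UᵀAU)) Schwartz. Then the theta series θ_{H,K}(Z) = det Y^{−λ/2} Σ_{U ∈ H+ℤ^(m×n)} f(UY^{1/2}) e(tr(UᵀAUZ)/2 + tr(KᵀAU)) satisfies θ_{H,K}(Z+S) = e(−tr(HᵀAHS)/2 − tr(S₀ 1_{nm} A₀ H)/2) · θ_{H,K̃}(Z), where K̃ = K + HS + (1/2) A^{−1} A₀ 1_{mn} S₀. -/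

import Mathlib

open scoped BigOperators
open Matrix

open scoped ComplexOrder in
/-- The square root of a positive semidefinite matrix (the definition of
`Matrix.PosSemidef.sqrt` in the older Mathlib, which has since been removed). -/
noncomputable def Matrix.PosSemidef.sqrt {n : Type*} [Fintype n] [DecidableEq n] {𝕜 : Type*}
    [RCLike 𝕜] {A : Matrix n n 𝕜} (hA : A.PosSemidef) : Matrix n n 𝕜 :=
  (hA.1.eigenvectorUnitary : Matrix n n 𝕜) * diagonal ((↑) ∘ (√·) ∘ hA.1.eigenvalues) *
    (star (hA.1.eigenvectorUnitary : Matrix n n 𝕜))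

open Matrix in

private lemma sum_eq_diag_of_symm {ι : Type*} [Fintype ι] [DecidableEq ι]
    (f : ι → ι → ZMod 2) (hf : ∀ i j, f i j = f j i) :
    ∑ i, ∑ j, f i j = ∑ i, f i i := by
  rw [← Finset.sum_product']
  rw [show (Finset.univ ×ˢ Finset.univ : Finset (ι × ι)) =
      Finset.univ.diag ∪ Finset.univ.offDiag from (Finset.diag_union_offDiag _).symm]
  rw [Finset.sum_union (Finset.disjoint_diag_offDiag _), Finset.sum_diag]
  have h0 : ∑ p ∈ Finset.univ.offDiag, f p.1 p.2 = 0 := by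
    refine Finset.sum_involution (fun p _ => p.swap) ?_ ?_ ?_ ?_
    · intro p _
      show f p.1 p.2 + f p.2 p.1 = 0
      rw [hf p.2 p.1]
      exact CharTwo.add_self_eq_zero _
    · intro p hp _
      have h := (Finset.mem_offDiag.1 hp).2.2
      intro hc
      exact h (congrArg Prod.snd hc)
    · intro p hp
      rw [Finset.mem_offDiag] at hp ⊢
      exact ⟨Finset.mem_univ _, Finset.mem_univ _, fun hc => hp.2.2 hc.symm⟩
    · intro p _
      exact Prod.swap_swap p
  rw [h0, add_zero]

private lemma zmod2_sq : ∀ x : ZMod 2, x * x = x := by decide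

private lemma zmod_key {m n : ℕ} (A : Matrix (Fin m) (Fin m) (ZMod 2)) (hA : Aᵀ = A)
    (S : Matrix (Fin n) (Fin n) (ZMod 2)) (hS : Sᵀ = S) (R : Matrix (Fin m) (Fin n) (ZMod 2)) :
    (Rᵀ * A * R * S).trace =
      (Matrix.diagonal (fun j => S j j) * (Matrix.of fun (_ : Fin n) (_ : Fin m) => (1 : ZMod 2)) *
        Matrix.diagonal (fun i => A i i) * R).trace := by
  have hA' : ∀ i k, A i k = A k i := by
    intro i k
    conv_lhs => rw [← hA]
    rfl
  have hS' : ∀ i k, S i k = S k i := by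
    intro i k
    conv_lhs => rw [← hS]
    rfl
  set M := Rᵀ * A * R with hM
  have hMsym : ∀ j l, M j l = M l j := by
    intro j l
    simp only [hM, Matrix.mul_apply, Matrix.transpose_apply, Finset.sum_mul, Finset.mul_sum]
    rw [Finset.sum_comm]
    refine Finset.sum_congr rfl fun k _ => Finset.sum_congr rfl fun i _ => ?_
    rw [hA' i k]; ring
  have lhs1 : (M * S).trace = ∑ j, ∑ l, M j l * S l j := by
    simp [Matrix.trace, Matrix.diag, Matrix.mul_apply]
  have lhs2 : ∑ j, ∑ l, M j l * S l j = ∑ j, M j j * S j j := by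
    apply sum_eq_diag_of_symm
    intro j l
    rw [hMsym j l, hS' l j]
  have hMdiag : ∀ j, M j j = ∑ i, A i i * R i j := by
    intro j
    have h1 : M j j = ∑ i, ∑ k, R i j * A i k * R k j := by
      simp only [hM, Matrix.mul_apply, Matrix.transpose_apply, Finset.sum_mul]
      rw [Finset.sum_comm]
    rw [h1]
    rw [sum_eq_diag_of_symm (fun i k => R i j * A i k * R k j) (fun i k => by
      show R i j * A i k * R k j = R k j * A k i * R i j
      rw [hA' i k]; ring)]
    refine Finset.sum_congr rfl fun i _ => ?_
    show R i j * A i i * R i j = A i i * R i j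
    rw [show R i j * A i i * R i j = A i i * (R i j * R i j) by ring, zmod2_sq]
  have rhs1 : (Matrix.diagonal (fun j => S j j) * (Matrix.of fun (_ : Fin n) (_ : Fin m) => (1 : ZMod 2)) *
        Matrix.diagonal (fun i => A i i) * R).trace = ∑ j, ∑ i, S j j * A i i * R i j := by
    have h : Matrix.diagonal (fun j => S j j) * (Matrix.of fun (_ : Fin n) (_ : Fin m) => (1 : ZMod 2)) *
        Matrix.diagonal (fun i => A i i) = Matrix.of fun j i => S j j * A i i := by
      ext j i
      simp [Matrix.mul_diagonal, Matrix.diagonal_mul]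
    rw [h]
    simp only [Matrix.trace, Matrix.diag, Matrix.mul_apply, Matrix.of_apply]
  rw [lhs1, lhs2, rhs1]
  refine Finset.sum_congr rfl fun j _ => ?_
  rw [hMdiag j, Finset.sum_mul]
  refine Finset.sum_congr rfl fun i _ => ?_
  ring

private lemma mapInt_mul {p q r : ℕ} {α : Type*} [CommRing α] (M : Matrix (Fin p) (Fin q) ℤ)
    (N : Matrix (Fin q) (Fin r) ℤ) :
    (M * N).map (Int.cast : ℤ → α) = (M.map Int.cast : Matrix (Fin p) (Fin q) α) *
      (N.map Int.cast : Matrix (Fin q) (Fin r) α) := by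
  ext i j
  simp [Matrix.mul_apply]

private lemma trace_mapInt {k : ℕ} {α : Type*} [CommRing α] (M : Matrix (Fin k) (Fin k) ℤ) :
    (M.map (Int.cast : ℤ → α)).trace = ((M.trace : ℤ) : α) := by
  simp [Matrix.trace, Matrix.diag, Matrix.map_apply]

private lemma mapInt_diagonal {k : ℕ} {α : Type*} [CommRing α] (d : Fin k → ℤ) :
    (Matrix.diagonal d).map (Int.cast : ℤ → α) = Matrix.diagonal (fun i => (d i : α)) :=
  Matrix.diagonal_map Int.cast_zero

private lemma mapInt_ones {p q : ℕ} {α : Type*} [CommRing α] :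
    (Matrix.of fun (_ : Fin p) (_ : Fin q) => (1 : ℤ)).map (Int.cast : ℤ → α) =
      Matrix.of fun _ _ => (1 : α) := by
  ext i j
  simp

private lemma key_parity {m n : ℕ} (A : Matrix (Fin m) (Fin m) ℤ) (hA : Aᵀ = A)
    (S : Matrix (Fin n) (Fin n) ℤ) (hS : Sᵀ = S) (R : Matrix (Fin m) (Fin n) ℤ) :
    ∃ k : ℤ, (Rᵀ * A * R * S).trace -
      (Matrix.diagonal (fun j => S j j) * (Matrix.of fun (_ : Fin n) (_ : Fin m) => (1:ℤ)) *
        Matrix.diagonal (fun i => A i i) * R).trace = 2 * k := by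
  suffices h : (2:ℤ) ∣ (Rᵀ * A * R * S).trace -
      (Matrix.diagonal (fun j => S j j) * (Matrix.of fun (_ : Fin n) (_ : Fin m) => (1:ℤ)) *
        Matrix.diagonal (fun i => A i i) * R).trace by
    obtain ⟨k, hk⟩ := h
    exact ⟨k, hk⟩
  have h0 : (((Rᵀ * A * R * S).trace -
      (Matrix.diagonal (fun j => S j j) * (Matrix.of fun (_ : Fin n) (_ : Fin m) => (1:ℤ)) *
        Matrix.diagonal (fun i => A i i) * R).trace : ℤ) : ZMod 2) = 0 := by
    rw [Int.cast_sub, ← trace_mapInt (α := ZMod 2), ← trace_mapInt (α := ZMod 2)]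
    rw [mapInt_mul, mapInt_mul, mapInt_mul, mapInt_mul, mapInt_mul, mapInt_mul,
      Matrix.transpose_map, mapInt_diagonal, mapInt_diagonal, mapInt_ones]
    rw [sub_eq_zero]
    exact zmod_key (A.map Int.cast)
      (by rw [← Matrix.transpose_map, hA])
      (S.map Int.cast)
      (by rw [← Matrix.transpose_map, hS])
      (R.map Int.cast)
  exact_mod_cast (ZMod.intCast_zmod_eq_zero_iff_dvd _ 2).mp h0

open Matrix in
private lemma real_ident {m n : ℕ} (A : Matrix (Fin m) (Fin m) ℤ) (hA : Aᵀ = A)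
    (hApos : (A.map (Int.cast : ℤ → ℝ)).PosDef)
    (S : Matrix (Fin n) (Fin n) ℤ) (hS : Sᵀ = S)
    (H K : Matrix (Fin m) (Fin n) ℝ) (R : Matrix (Fin m) (Fin n) ℤ) :
    ∃ k : ℤ,
      ((H + R.map Int.cast)ᵀ * A.map (Int.cast : ℤ → ℝ) * (H + R.map Int.cast) *
          S.map Int.cast).trace / 2
        + (Kᵀ * A.map (Int.cast : ℤ → ℝ) * (H + R.map Int.cast)).trace
        - ((K + H * S.map (Int.cast : ℤ → ℝ) +
            (1 / 2 : ℝ) • ((A.map (Int.cast : ℤ → ℝ))⁻¹ *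
              (Matrix.diagonal fun i => (A i i : ℝ)) *
              (Matrix.of fun (_ : Fin m) (_ : Fin n) => (1 : ℝ)) *
              (Matrix.diagonal fun i => (S i i : ℝ))))ᵀ *
            A.map (Int.cast : ℤ → ℝ) * (H + R.map Int.cast)).trace
        + (Hᵀ * A.map (Int.cast : ℤ → ℝ) * H * S.map Int.cast).trace / 2
        + ((Matrix.diagonal fun i => (S i i : ℝ)) *
            (Matrix.of fun (_ : Fin n) (_ : Fin m) => (1 : ℝ)) *
            (Matrix.diagonal fun i => (A i i : ℝ)) * H).trace / 2
      = (k : ℝ) := by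
  obtain ⟨k, hk⟩ := key_parity A hA S hS R
  refine ⟨k, ?_⟩
  set Ar : Matrix (Fin m) (Fin m) ℝ := A.map (Int.cast : ℤ → ℝ) with hAr_def
  set Sr : Matrix (Fin n) (Fin n) ℝ := S.map (Int.cast : ℤ → ℝ) with hSr_def
  set Rr : Matrix (Fin m) (Fin n) ℝ := R.map (Int.cast : ℤ → ℝ) with hRr_def
  set DA : Matrix (Fin m) (Fin m) ℝ := Matrix.diagonal fun i => (A i i : ℝ) with hDA_def
  set DS : Matrix (Fin n) (Fin n) ℝ := Matrix.diagonal fun i => (S i i : ℝ) with hDS_def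
  set Jmn : Matrix (Fin m) (Fin n) ℝ := Matrix.of fun _ _ => (1 : ℝ) with hJmn_def
  set Jnm : Matrix (Fin n) (Fin m) ℝ := Matrix.of fun _ _ => (1 : ℝ) with hJnm_def
  have hAr : Arᵀ = Ar := by rw [hAr_def, ← Matrix.transpose_map, hA]
  have hSr : Srᵀ = Sr := by rw [hSr_def, ← Matrix.transpose_map, hS]
  have hJ : Jmnᵀ = Jnm := by ext i j; simp [hJmn_def, hJnm_def]
  have hinv : Ar⁻¹ * Ar = 1 := Matrix.nonsing_inv_mul Ar (isUnit_iff_ne_zero.2 hApos.det_pos.ne')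
  -- step 1: the transposed tilde-K times Ar
  have hsm : (Ar⁻¹ * DA * Jmn * DS)ᵀ * Ar = DS * (Jnm * DA) := by
    rw [Matrix.transpose_mul, Matrix.transpose_mul, Matrix.transpose_mul,
      Matrix.transpose_nonsing_inv, hAr, hJ]
    rw [show DAᵀ = DA from Matrix.diagonal_transpose _, show DSᵀ = DS from
      Matrix.diagonal_transpose _]
    simp only [Matrix.mul_assoc]
    rw [hinv, Matrix.mul_one]
  have hL1 : (K + H * Sr + (1 / 2 : ℝ) • (Ar⁻¹ * DA * Jmn * DS))ᵀ * Ar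
      = Kᵀ * Ar + Sr * (Hᵀ * Ar) + (1 / 2 : ℝ) • (DS * (Jnm * DA)) := by
    rw [Matrix.transpose_add, Matrix.transpose_add, Matrix.transpose_smul,
      Matrix.add_mul, Matrix.add_mul, Matrix.smul_mul, hsm, Matrix.transpose_mul, hSr,
      Matrix.mul_assoc]
  rw [hL1]
  -- distribute everything
  simp only [Matrix.transpose_add, Matrix.add_mul, Matrix.mul_add, Matrix.trace_add,
    Matrix.smul_mul, Matrix.trace_smul, smul_eq_mul, Matrix.mul_assoc]
  -- cyclic/transpose trace identities
  have cyc1 : (Sr * (Hᵀ * (Ar * H))).trace = (Hᵀ * (Ar * (H * Sr))).trace := by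
    rw [Matrix.trace_mul_comm]
    simp only [Matrix.mul_assoc]
  have cyc2 : (Sr * (Hᵀ * (Ar * Rr))).trace = (Hᵀ * (Ar * (Rr * Sr))).trace := by
    rw [Matrix.trace_mul_comm]
    simp only [Matrix.mul_assoc]
  have tt : (Hᵀ * (Ar * (Rr * Sr))).trace = (Rrᵀ * (Ar * (H * Sr))).trace := by
    rw [← Matrix.trace_transpose (Hᵀ * (Ar * (Rr * Sr)))]
    simp only [Matrix.transpose_mul, Matrix.transpose_transpose, hAr, hSr,
      Matrix.mul_assoc]
    rw [Matrix.trace_mul_comm]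
    simp only [Matrix.mul_assoc]
  -- the parity fact, over ℝ
  have hkR : (Rrᵀ * (Ar * (Rr * Sr))).trace - (DS * (Jnm * (DA * Rr))).trace = 2 * (k : ℝ) := by
    have h1 : ((Rᵀ * A * R * S).map (Int.cast : ℤ → ℝ)).trace -
        ((Matrix.diagonal (fun j => S j j) * (Matrix.of fun (_ : Fin n) (_ : Fin m) => (1:ℤ)) *
          Matrix.diagonal (fun i => A i i) * R).map (Int.cast : ℤ → ℝ)).trace = 2 * (k : ℝ) := by
      rw [trace_mapInt, trace_mapInt]
      exact_mod_cast congrArg (Int.cast : ℤ → ℝ) hk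
    rw [mapInt_mul, mapInt_mul, mapInt_mul, mapInt_mul, mapInt_mul, mapInt_mul,
      Matrix.transpose_map, mapInt_diagonal, mapInt_diagonal, mapInt_ones] at h1
    simp only [Matrix.mul_assoc] at h1
    exact h1
  linarith [cyc1, cyc2, tt, hkR]

open Matrix in
private lemma mapReal_mul {p q r : ℕ} (M : Matrix (Fin p) (Fin q) ℝ)
    (N : Matrix (Fin q) (Fin r) ℝ) :
    (M * N).map (Complex.ofReal : ℝ → ℂ) = M.map Complex.ofReal * N.map Complex.ofReal := by
  ext i j
  simp [Matrix.mul_apply]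

private lemma trace_mapReal {k : ℕ} (M : Matrix (Fin k) (Fin k) ℝ) :
    (M.map (Complex.ofReal : ℝ → ℂ)).trace = ((M.trace : ℝ) : ℂ) := by
  simp [Matrix.trace, Matrix.diag, Matrix.map_apply]


/-- The Siegel theta series `θ_{H,K}(Z)` with characteristics `H, K`,
associated with `f` and the integral matrix `A`; `Ysq` denotes the square root
`Y^{1/2}` of `Y = Im Z` and `Ydet` its determinant (these depend only on
`Im Z`, which is unchanged by `Z ↦ Z + S` for real `S`). -/
noncomputable def theta {m n : ℕ} (A : Matrix (Fin m) (Fin m) ℤ) (lam : ℤ)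
    (f : (Fin m → Fin n → ℝ) → ℝ) (Ysq : Matrix (Fin n) (Fin n) ℝ) (Ydet : ℝ)
    (H K : Matrix (Fin m) (Fin n) ℝ) (Z : Matrix (Fin n) (Fin n) ℂ) : ℂ :=
  ((Ydet ^ (-(lam : ℝ) / 2) : ℝ) : ℂ) *
    ∑' R : Matrix (Fin m) (Fin n) ℤ,
      ((f fun a b => ((H + R.map (Int.cast : ℤ → ℝ)) * Ysq) a b : ℝ) : ℂ) *
        Complex.exp (2 * Real.pi * Complex.I *
          ((((H + R.map (Int.cast : ℤ → ℝ)).map (Complex.ofReal : ℝ → ℂ))ᵀ *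
                A.map (Int.cast : ℤ → ℂ) *
                ((H + R.map (Int.cast : ℤ → ℝ)).map (Complex.ofReal : ℝ → ℂ)) *
                Z).trace / 2 +
            ((K.map (Complex.ofReal : ℝ → ℂ))ᵀ * A.map (Int.cast : ℤ → ℂ) *
                ((H + R.map (Int.cast : ℤ → ℝ)).map
                  (Complex.ofReal : ℝ → ℂ))).trace))

/-- the transformation behavior of the Siegel theta series under
`Z ↦ Z + S` for a symmetric integer matrix `S`. -/
theorem stmt17 {m n : ℕ} (A : Matrix (Fin m) (Fin m) ℤ) (hAsym : Aᵀ = A)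
    (hApos : (A.map (Int.cast : ℤ → ℝ)).PosDef)
    (S : Matrix (Fin n) (Fin n) ℤ) (hSsym : Sᵀ = S)
    (H K : Matrix (Fin m) (Fin n) ℝ) (lam : ℤ)
    (Z : Matrix (Fin n) (Fin n) ℂ) (hZs : Zᵀ = Z)
    (hY : (Z.map Complex.im).PosDef)
    (f : (Fin m → Fin n → ℝ) → ℝ)
    (hf : ∃ φ : SchwartzMap (Fin m → Fin n → ℝ) ℝ, ∀ U : Fin m → Fin n → ℝ,
      φ U = f U * Real.exp (-Real.pi *
        ((Matrix.of U)ᵀ * A.map (Int.cast : ℤ → ℝ) * Matrix.of U).trace)) :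
    theta A lam f hY.posSemidef.sqrt (Z.map Complex.im).det H K
        (Z + S.map (Int.cast : ℤ → ℂ)) =
      Complex.exp (2 * Real.pi * Complex.I *
          (-(((Hᵀ * A.map (Int.cast : ℤ → ℝ) * H * S.map Int.cast).trace : ℝ) / 2 +
              (((Matrix.diagonal fun i => (S i i : ℝ)) *
                  (Matrix.of fun (_ : Fin n) (_ : Fin m) => (1 : ℝ)) *
                  (Matrix.diagonal fun i => (A i i : ℝ)) * H).trace : ℝ) / 2) : ℂ)) *
        theta A lam f hY.posSemidef.sqrt (Z.map Complex.im).det H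
          (K + H * S.map (Int.cast : ℤ → ℝ) +
            (1 / 2 : ℝ) • ((A.map (Int.cast : ℤ → ℝ))⁻¹ *
              (Matrix.diagonal fun i => (A i i : ℝ)) *
              (Matrix.of fun (_ : Fin m) (_ : Fin n) => (1 : ℝ)) *
              (Matrix.diagonal fun i => (S i i : ℝ)))) Z := by
  have hAc : A.map (Int.cast : ℤ → ℂ) = (A.map (Int.cast : ℤ → ℝ)).map Complex.ofReal := by
    ext i j; simp
  have hSc : S.map (Int.cast : ℤ → ℂ) = (S.map (Int.cast : ℤ → ℝ)).map Complex.ofReal := by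
    ext i j; simp
  unfold theta
  rw [mul_left_comm]
  congr 1
  rw [← tsum_mul_left]
  refine tsum_congr fun R => ?_
  rw [mul_left_comm]
  congr 1
  rw [← Complex.exp_add]
  obtain ⟨k, hkey⟩ := real_ident A hAsym hApos S hSsym H K R
  refine Complex.exp_eq_exp_iff_exists_int.mpr ⟨k, ?_⟩
  rw [Matrix.mul_add, Matrix.trace_add]
  simp only [hAc, hSc, ← Matrix.transpose_map, ← mapReal_mul, trace_mapReal]
  have hc := congrArg (Complex.ofReal : ℝ → ℂ) hkey
  push_cast at hc
  linear_combination (2 * (Real.pi : ℂ) * Complex.I) * hc
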